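/- Let T be a finite rooted tree and k ≥ 2. There is a bijection between (k+1)-linearizations f of T and triples (C, g, h) where C is a nonempty corolla cut of T, h is a 2-linearization of C, and g is a k-linearization of the quotient tree T/C with g^{-1}(k) equal to the set T∧C of leaves of T/C coming from minimal elements of C. The bijection sends (C,g,h) to the linearization given by the ordered partition (g^{-1}(1),...,g^{-1}(k−1), h^{-1}(1), h^{-1}(2)). -/

import Mathlib

open Classical

def IsLinearization {P : Type*} [PartialOrder P] {k : ℕ} (f : P → Fin k) : Prop :=
  Function.Surjective f ∧ ∀ x y : P, x < y → f x < f y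

def CorollaCut {T : Type*} [PartialOrder T] (C : Set T) : Prop :=
  C.Nonempty ∧ (∀ y ∈ C, ∀ x : T, y < x → IsMax x) ∧ (∀ y ∈ C, ∀ x : T, y < x → x ∈ C)

def cutTop {T : Type*} [PartialOrder T] (C : Set T) : Set T :=
  {z : T | z ∈ C ∧ ∃ y ∈ C, y < z}

def quotSet {T : Type*} [PartialOrder T] (C : Set T) : Set T :=
  {z : T | z ∉ cutTop C}

section Helpers
variable {T : Type*} [PartialOrder T] {k : ℕ}

lemma combined_isLinearization (hk : 2 ≤ k)
    {C : Set T} (hC : CorollaCut C)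
    {h : ↥C → Fin 2} (hh : IsLinearization h)
    {g : ↥(quotSet C) → Fin k} (hg : IsLinearization g)
    (hgtop : ∀ z : ↥(quotSet C), ((g z : Fin k) : ℕ) = k - 1 ↔ (z : T) ∈ C)
    (f : T → Fin (k + 1))
    (hf : ∀ z : T, (f z : ℕ) = if hz : z ∈ C then k - 1 + ((h ⟨z, hz⟩ : Fin 2) : ℕ)
        else ((g ⟨z, fun hmem => hz hmem.1⟩ : Fin k) : ℕ)) :
    IsLinearization f := by
  have hq : ∀ z : T, z ∉ C → z ∈ quotSet C := fun z hz hmem => hz hmem.1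
  constructor
  · intro j
    rcases Nat.lt_or_ge (j : ℕ) (k - 1) with hj | hj
    · obtain ⟨z, hz⟩ := hg.1 ⟨(j : ℕ), by omega⟩
      have hzc : (z : T) ∉ C := by
        intro hmem
        have := (hgtop z).mpr hmem
        rw [hz] at this
        simp at this; omega
      refine ⟨(z : T), Fin.ext ?_⟩
      rw [hf ((z : T)), dif_neg hzc]
      have : (⟨(z : T), fun hmem => hzc hmem.1⟩ : ↥(quotSet C)) = z := rfl
      rw [this, hz]
    · have hle := j.isLt
      rcases Nat.eq_or_lt_of_le hj with hj' | hj'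
      · obtain ⟨z, hz⟩ := hh.1 ⟨0, by omega⟩
        refine ⟨(z : T), Fin.ext ?_⟩
        rw [hf ((z : T)), dif_pos z.2]
        have : (⟨(z : T), z.2⟩ : ↥C) = z := rfl
        rw [this, hz]
        simp; omega
      · obtain ⟨z, hz⟩ := hh.1 ⟨1, by omega⟩
        refine ⟨(z : T), Fin.ext ?_⟩
        rw [hf ((z : T)), dif_pos z.2]
        have : (⟨(z : T), z.2⟩ : ↥C) = z := rfl
        rw [this, hz]
        simp; omega
  · intro x y hxy
    have hfx := hf x
    have hfy := hf y
    rw [Fin.lt_def]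
    by_cases hx : x ∈ C
    · have hy : y ∈ C := hC.2.2 x hx y hxy
      rw [dif_pos hx] at hfx
      rw [dif_pos hy] at hfy
      have := hh.2 ⟨x, hx⟩ ⟨y, hy⟩ (Subtype.mk_lt_mk.mpr hxy)
      rw [Fin.lt_def] at this
      omega
    · rw [dif_neg hx] at hfx
      have hgx_lt : ((g ⟨x, hq x hx⟩ : Fin k) : ℕ) < k - 1 := by
        have h1 := (g ⟨x, hq x hx⟩).isLt
        have h2 := (hgtop ⟨x, hq x hx⟩)
        rcases Nat.lt_or_ge ((g ⟨x, hq x hx⟩ : Fin k) : ℕ) (k - 1) with h | h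
        · exact h
        · exact absurd (h2.mp (by omega)) hx
      by_cases hy : y ∈ C
      · rw [dif_pos hy] at hfy
        omega
      · rw [dif_neg hy] at hfy
        have := hg.2 ⟨x, hq x hx⟩ ⟨y, hq y hy⟩ (Subtype.mk_lt_mk.mpr hxy)
        rw [Fin.lt_def] at this
        omega

variable (T k) in
/-- The type of triples `(C, h, g)`. -/
def CutTriple (hk : 2 ≤ k) : Type _ :=
  (C : {C : Set T // CorollaCut C}) ×
    ({h : ↥C.1 → Fin 2 // IsLinearization h} ×
      {g : ↥(quotSet C.1) → Fin k // IsLinearization g ∧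
        ∀ z : ↥(quotSet C.1), g z = ⟨k - 1, (by omega : k - 1 < k + 0)⟩ ↔ (z : T) ∈ C.1})

variable (T k) in
/-- The forward map of the bijection. -/
noncomputable def corollaMap (hk : 2 ≤ k) (p : CutTriple T k hk) : {f : T → Fin (k + 1) // IsLinearization f} :=
  ⟨fun z =>
    if hz : z ∈ (p.1.1 : Set T) then
      ⟨k - 1 + ((p.2.1.1 ⟨z, hz⟩ : Fin 2) : ℕ),
        by have := (p.2.1.1 ⟨z, hz⟩).isLt; omega⟩
    else
      ⟨((p.2.2.1 ⟨z, fun hmem => hz hmem.1⟩ : Fin k) : ℕ),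
        by have := (p.2.2.1 ⟨z, fun hmem => hz hmem.1⟩).isLt; omega⟩,
    by
      apply combined_isLinearization hk p.1.2 p.2.1.2 p.2.2.2.1
      · intro z
        rw [← p.2.2.2.2 z, Fin.ext_iff]
      · intro z
        by_cases hz : z ∈ (p.1.1 : Set T)
        · rw [dif_pos hz, dif_pos hz]
        · rw [dif_neg hz, dif_neg hz]⟩

lemma corollaMap_injective (hk : 2 ≤ k) : Function.Injective (corollaMap T k hk) := by
  rintro ⟨⟨C₁, hC₁⟩, ⟨h₁, hh₁⟩, ⟨g₁, hg₁, hgt₁⟩⟩ ⟨⟨C₂, hC₂⟩, ⟨h₂, hh₂⟩, ⟨g₂, hg₂, hgt₂⟩⟩ hpq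
  rw [Subtype.ext_iff] at hpq
  simp only [corollaMap] at hpq
  have hval := fun z : T => congrArg Fin.val (congrFun hpq z)
  have hsub : ∀ (D₁ D₂ : Set T) (a₁ : ↥D₁ → Fin 2) (b₂ : ↥(quotSet D₂) → Fin k),
      (∀ w : ↥(quotSet D₂), b₂ w = ⟨k - 1, by omega⟩ ↔ (w : T) ∈ D₂) →
      ∀ z : T, ∀ hz1 : z ∈ D₁, ∀ hz2 : z ∉ D₂,
      k - 1 + ((a₁ ⟨z, hz1⟩ : Fin 2) : ℕ) =
        ((b₂ ⟨z, fun hmem => hz2 hmem.1⟩ : Fin k) : ℕ) → False := by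
    intro D₁ D₂ a₁ b₂ hbt z hz1 hz2 heq
    have hne : ((b₂ ⟨z, fun hmem => hz2 hmem.1⟩ : Fin k) : ℕ) ≠ k - 1 := by
      intro hv
      exact hz2 ((hbt ⟨z, fun hmem => hz2 hmem.1⟩).mp (Fin.ext hv))
    have hlt := (b₂ ⟨z, fun hmem => hz2 hmem.1⟩).isLt
    omega
  have hCC : C₁ = C₂ := by
    ext z
    constructor
    · intro hz1
      by_contra hz2
      have h0 := hval z
      rw [dif_pos hz1, dif_neg hz2] at h0
      exact hsub C₁ C₂ h₁ g₂ hgt₂ z hz1 hz2 h0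
    · intro hz2
      by_contra hz1
      have h0 := hval z
      rw [dif_neg hz1, dif_pos hz2] at h0
      exact hsub C₂ C₁ h₂ g₁ hgt₁ z hz2 hz1 h0.symm
  subst hCC
  have hh12 : h₁ = h₂ := by
    funext z
    have h0 := hval (z : T)
    rw [dif_pos z.2, dif_pos z.2] at h0
    simp only [Fin.val_mk, Subtype.coe_eta] at h0
    exact Fin.ext (by omega)
  have hg12 : g₁ = g₂ := by
    funext z
    by_cases hz : (z : T) ∈ C₁
    · rw [(hgt₁ z).mpr hz, (hgt₂ z).mpr hz]
    · have h0 := hval (z : T)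
      rw [dif_neg hz, dif_neg hz] at h0
      simp only [Fin.val_mk, Subtype.coe_eta] at h0
      exact Fin.ext h0
  subst hh12
  subst hg12
  rfl

lemma corollaMap_surjective (hk : 2 ≤ k) : Function.Surjective (corollaMap T k hk) := by
  rintro ⟨f, hfsurj, hfmono⟩
  have hflt : ∀ z : T, (f z : ℕ) < k + 1 := fun z => (f z).isLt
  let C : Set T := {z : T | k - 1 ≤ (f z : ℕ)}
  have hmemC : ∀ z : T, z ∈ C ↔ k - 1 ≤ (f z : ℕ) := fun z => Iff.rfl
  have hCcut : CorollaCut C := by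
    refine ⟨?_, ?_, ?_⟩
    · obtain ⟨z, hz⟩ := hfsurj ⟨k, by omega⟩
      refine ⟨z, ?_⟩
      have : (f z : ℕ) = k := by rw [hz]
      rw [hmemC]; omega
    · intro y hy x hyx
      have h1 : (f y : ℕ) < (f x : ℕ) := hfmono y x hyx
      have h2 : k - 1 ≤ (f y : ℕ) := hy
      intro w hw
      rcases eq_or_lt_of_le hw with h | h
      · exact h.ge
      · have h3 := hfmono x w h
        have h4 := hflt w
        omega
    · intro y hy x hyx
      have h1 : (f y : ℕ) < (f x : ℕ) := hfmono y x hyx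
      have h2 : k - 1 ≤ (f y : ℕ) := hy
      rw [hmemC]; omega
  let h : ↥C → Fin 2 := fun z => ⟨(f (z : T) : ℕ) - (k - 1), by
    have h1 := hflt (z : T)
    have h2 : k - 1 ≤ (f (z : T) : ℕ) := z.2
    omega⟩
  have hh : IsLinearization h := by
    constructor
    · intro j
      have hjlt := j.isLt
      obtain ⟨z, hz⟩ := hfsurj ⟨k - 1 + (j : ℕ), by omega⟩
      have hzv : (f z : ℕ) = k - 1 + (j : ℕ) := by rw [hz]
      have hzC : z ∈ C := by rw [hmemC]; omega
      refine ⟨⟨z, hzC⟩, Fin.ext ?_⟩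
      show (f z : ℕ) - (k - 1) = (j : ℕ)
      omega
    · intro x y hxy
      have hlt := hfmono (x : T) (y : T) (Subtype.coe_lt_coe.mpr hxy)
      rw [Fin.lt_def] at hlt ⊢
      have h2 : k - 1 ≤ (f (x : T) : ℕ) := x.2
      show (f (x : T) : ℕ) - (k - 1) < (f (y : T) : ℕ) - (k - 1)
      omega
  let g : ↥(quotSet C) → Fin k := fun z =>
    if hz : (z : T) ∈ C then ⟨k - 1, by omega⟩
    else ⟨(f (z : T) : ℕ), by
      have h2 : ¬ k - 1 ≤ (f (z : T) : ℕ) := hz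
      omega⟩
  have hgv : ∀ (z : ↥(quotSet C)) (hz : (z : T) ∉ C), (g z : ℕ) = (f (z : T) : ℕ) := by
    intro z hz
    show ((dite _ _ _ : Fin k) : ℕ) = _
    rw [dif_neg hz]
  have hgv' : ∀ (z : ↥(quotSet C)) (hz : (z : T) ∈ C), g z = ⟨k - 1, by omega⟩ := by
    intro z hz
    show (dite _ _ _ : Fin k) = _
    rw [dif_pos hz]
  have hg : IsLinearization g := by
    constructor
    · intro j
      have hjlt := j.isLt
      by_cases hj : (j : ℕ) = k - 1
      · obtain ⟨z, hz⟩ := hfsurj ⟨k - 1, by omega⟩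
        have hzv : (f z : ℕ) = k - 1 := by rw [hz]
        have hzC : z ∈ C := by rw [hmemC]; omega
        have hzq : z ∈ quotSet C := by
          intro hcut
          obtain ⟨_, y, hyC, hylt⟩ := hcut
          have h1 := hfmono y z hylt
          have h2 : k - 1 ≤ (f y : ℕ) := hyC
          omega
        refine ⟨⟨z, hzq⟩, ?_⟩
        rw [hgv' ⟨z, hzq⟩ hzC]
        exact Fin.ext (by simp [hj])
      · obtain ⟨z, hz⟩ := hfsurj ⟨(j : ℕ), by omega⟩
        have hzv : (f z : ℕ) = (j : ℕ) := by rw [hz]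
        have hzC : z ∉ C := by rw [hmemC]; omega
        have hzq : z ∈ quotSet C := fun hcut => hzC hcut.1
        refine ⟨⟨z, hzq⟩, Fin.ext ?_⟩
        rw [hgv ⟨z, hzq⟩ hzC]
        show (f z : ℕ) = (j : ℕ)
        omega
    · intro x y hxy
      have hlt := hfmono (x : T) (y : T) (Subtype.coe_lt_coe.mpr hxy)
      rw [Fin.lt_def] at hlt
      by_cases hx : (x : T) ∈ C
      · by_cases hy : (y : T) ∈ C
        · have hcut : (y : T) ∈ cutTop C := ⟨hy, (x : T), hx, Subtype.coe_lt_coe.mpr hxy⟩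
          exact absurd hcut y.2
        · have h3 : ¬ k - 1 ≤ (f (y : T) : ℕ) := hy
          have h2 : k - 1 ≤ (f (x : T) : ℕ) := hx
          exact absurd (show k - 1 ≤ (f (y : T) : ℕ) by omega) h3
      · have hy' : ¬ k - 1 ≤ (f (x : T) : ℕ) := hx
        rw [Fin.lt_def]
        by_cases hy : (y : T) ∈ C
        · rw [hgv x hx, hgv' y hy]
          simp only [Fin.val_mk]
          omega
        · rw [hgv x hx, hgv y hy]
          have h3 : ¬ k - 1 ≤ (f (y : T) : ℕ) := hy
          omega
  have hgtop : ∀ z : ↥(quotSet C), g z = ⟨k - 1, by omega⟩ ↔ (z : T) ∈ C := by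
    intro z
    by_cases hz : (z : T) ∈ C
    · simp only [hz, iff_true]
      exact hgv' z hz
    · simp only [hz, iff_false]
      intro hgz
      have h0 := hgv z hz
      rw [hgz] at h0
      simp only [Fin.val_mk] at h0
      have h3 : ¬ k - 1 ≤ (f (z : T) : ℕ) := hz
      omega
  refine ⟨⟨⟨C, hCcut⟩, ⟨h, hh⟩, ⟨g, hg, hgtop⟩⟩, ?_⟩
  apply Subtype.ext
  simp only [corollaMap]
  funext z
  by_cases hz : z ∈ C
  · rw [dif_pos hz]
    apply Fin.ext
    show k - 1 + ((f z : ℕ) - (k - 1)) = (f z : ℕ)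
    have h2 : k - 1 ≤ (f z : ℕ) := hz
    omega
  · rw [dif_neg hz]
    apply Fin.ext
    show ((g ⟨z, fun hmem => hz hmem.1⟩ : Fin k) : ℕ) = (f z : ℕ)
    exact hgv ⟨z, fun hmem => hz hmem.1⟩ hz
end Helpers

theorem linearizations_corollaCut_bijection {T : Type*} [Fintype T] [PartialOrder T]
    (r : T) (hr : ∀ x : T, r ≤ x)
    (htree : ∀ x : T, IsChain (· ≤ ·) {y : T | y < x})
    (k : ℕ) (hk : 2 ≤ k) :
    ∃ e : ((C : {C : Set T // CorollaCut C}) ×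
        ({h : ↥C.1 → Fin 2 // IsLinearization h} ×
          {g : ↥(quotSet C.1) → Fin k // IsLinearization g ∧
            ∀ z : ↥(quotSet C.1), g z = ⟨k - 1, by omega⟩ ↔ (z : T) ∈ C.1})) ≃
        {f : T → Fin (k + 1) // IsLinearization f},
      ∀ p, ∀ z : T,
        (e p : T → Fin (k + 1)) z =
          if hz : z ∈ (p.1.1 : Set T) then
            ⟨k - 1 + ((p.2.1.1 ⟨z, hz⟩ : Fin 2) : ℕ),
              by have := (p.2.1.1 ⟨z, hz⟩).isLt; omega⟩
          else
            ⟨((p.2.2.1 ⟨z, fun hmem => hz hmem.1⟩ : Fin k) : ℕ),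
              by have := (p.2.2.1 ⟨z, fun hmem => hz hmem.1⟩).isLt; omega⟩ :=
  ⟨Equiv.ofBijective (corollaMap T k hk)
      ⟨corollaMap_injective hk, corollaMap_surjective hk⟩,
    fun p z => rfl⟩
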